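/- Let M be a real symmetric positive definite p×p matrix, V a real symmetric p×p matrix with V M V ⪯ M, N a real symmetric p×p matrix with N ⪯ V M V, and K an arbitrary real n×p matrix. Set w² = λ_min(M − V M V)/λ_max(M). Then K(M − N)Kᵀ ⪰ w²·K M Kᵀ in the Loewner order; equivalently, −K M Kᵀ + K N Kᵀ ⪯ −w²·K M Kᵀ. -/

import Mathlib

open Matrix

lemma psd_add' {p : ℕ} {A B : Matrix (Fin p) (Fin p) ℝ}
    (hA : A.PosSemidef) (hB : B.PosSemidef) : (A + B).PosSemidef :=
  .of_dotProduct_mulVec_nonneg (hA.1.add hB.1) fun x => by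
    simp only [add_mulVec, dotProduct_add, map_add]
    exact add_nonneg (hA.dotProduct_mulVec_nonneg x) (hB.dotProduct_mulVec_nonneg x)

lemma psd_smul' {p : ℕ} {A : Matrix (Fin p) (Fin p) ℝ} {c : ℝ}
    (hc : 0 ≤ c) (hA : A.PosSemidef) : (c • A).PosSemidef :=
  .of_dotProduct_mulVec_nonneg (by rw [Matrix.IsHermitian, conjTranspose_smul, star_trivial, hA.1.eq]) fun x => by
    simp only [smul_mulVec, dotProduct_smul, smul_eq_mul]
    exact mul_nonneg hc (hA.dotProduct_mulVec_nonneg x)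

/-- For a real hermitian matrix, `A - λ_min • 1` is PSD. -/
lemma sub_iInf_smul_one_posSemidef {p : ℕ} {A : Matrix (Fin p) (Fin p) ℝ}
    (hA : A.IsHermitian) : (A - (⨅ i, hA.eigenvalues i) • 1).PosSemidef := by
  rcases Nat.eq_zero_or_pos p with hp | hp
  · subst hp
    exact ⟨Subsingleton.elim _ _, fun x => by rw [Subsingleton.elim x 0]; simp⟩
  have : Nonempty (Fin p) := ⟨⟨0, hp⟩⟩
  set c := ⨅ i, hA.eigenvalues i with hc
  have hdecomp := hA.spectral_theorem
  simp only [Unitary.conjStarAlgAut_apply, Unitary.coe_star] at hdecomp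
  set U := (hA.eigenvectorUnitary : Matrix (Fin p) (Fin p) ℝ)
  have hU1 : U * star U = 1 := (Matrix.mem_unitaryGroup_iff).mp hA.eigenvectorUnitary.2
  have key : A - c • 1 = U * (diagonal (fun i => hA.eigenvalues i - c)) * star U := by
    have : diagonal (fun i => hA.eigenvalues i - c)
        = diagonal ((RCLike.ofReal : ℝ → ℝ) ∘ hA.eigenvalues) - c • 1 := by
      simp [diagonal_sub, Matrix.smul_one_eq_diagonal, ← diagonal_sub]
    rw [this, Matrix.mul_sub, Matrix.sub_mul, Matrix.mul_smul, Matrix.smul_mul, Matrix.mul_one, hU1,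
      ← hdecomp]
  rw [key, Matrix.star_eq_conjTranspose]
  apply Matrix.PosSemidef.mul_mul_conjTranspose_same
  refine posSemidef_diagonal_iff.mpr fun i => ?_
  have : c ≤ hA.eigenvalues i := ciInf_le (Set.Finite.bddBelow (Set.finite_range _)) i
  linarith

/-- For a real hermitian matrix, `λ_max • 1 - A` is PSD. -/
lemma iSup_smul_one_sub_posSemidef {p : ℕ} {A : Matrix (Fin p) (Fin p) ℝ}
    (hA : A.IsHermitian) : ((⨆ i, hA.eigenvalues i) • 1 - A).PosSemidef := by
  rcases Nat.eq_zero_or_pos p with hp | hp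
  · subst hp
    exact ⟨Subsingleton.elim _ _, fun x => by rw [Subsingleton.elim x 0]; simp⟩
  have : Nonempty (Fin p) := ⟨⟨0, hp⟩⟩
  set c := ⨆ i, hA.eigenvalues i with hc
  have hdecomp := hA.spectral_theorem
  simp only [Unitary.conjStarAlgAut_apply, Unitary.coe_star] at hdecomp
  set U := (hA.eigenvectorUnitary : Matrix (Fin p) (Fin p) ℝ)
  have hU1 : U * star U = 1 := (Matrix.mem_unitaryGroup_iff).mp hA.eigenvectorUnitary.2
  have key : c • 1 - A = U * (diagonal (fun i => c - hA.eigenvalues i)) * star U := by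
    have : diagonal (fun i => c - hA.eigenvalues i)
        = c • 1 - diagonal ((RCLike.ofReal : ℝ → ℝ) ∘ hA.eigenvalues) := by
      simp [Matrix.smul_one_eq_diagonal, ← diagonal_sub]
    rw [this, Matrix.mul_sub, Matrix.sub_mul, Matrix.mul_smul, Matrix.smul_mul, Matrix.mul_one, hU1,
      ← hdecomp]
  rw [key, Matrix.star_eq_conjTranspose]
  apply Matrix.PosSemidef.mul_mul_conjTranspose_same
  refine posSemidef_diagonal_iff.mpr fun i => ?_
  have : hA.eigenvalues i ≤ c := le_ciSup (Set.Finite.bddAbove (Set.finite_range _)) i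
  linarith

/-- If `V M V ⪯ M`, `N ⪯ V M V`, and `w² = λ_min(M - VMV)/λ_max(M)`, then for any `K`,
`K (M - N) Kᵀ ⪰ w² · K M Kᵀ` in the Loewner order. -/
theorem filtering_error_covariance_bound
    {p n : ℕ} (M V N : Matrix (Fin p) (Fin p) ℝ)
    (hM : M.PosDef) (hV : V.IsHermitian) (hN : N.IsHermitian)
    (hVMV : (M - V * M * V).PosSemidef)
    (hNle : (V * M * V - N).PosSemidef)
    (K : Matrix (Fin n) (Fin p) ℝ) :
    (K * (M - N) * Kᵀ -
      ((⨅ i, hVMV.1.eigenvalues i) / (⨆ i, hM.1.eigenvalues i)) • (K * M * Kᵀ)).PosSemidef := by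
  set c : ℝ := (⨅ i, hVMV.1.eigenvalues i) / (⨆ i, hM.1.eigenvalues i) with hc
  rcases Nat.eq_zero_or_pos p with hp | hp
  · subst hp
    have h1 : K * (M - N) * Kᵀ = 0 := by
      ext i j; simp [Matrix.mul_apply]
    have h2 : K * M * Kᵀ = 0 := by
      ext i j; simp [Matrix.mul_apply]
    rw [h1, h2, smul_zero, sub_zero]
    exact Matrix.PosSemidef.zero
  have : Nonempty (Fin p) := ⟨⟨0, hp⟩⟩
  -- λ_max(M) is positive
  have hmax : 0 < ⨆ i, hM.1.eigenvalues i :=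
    lt_of_lt_of_le (hM.eigenvalues_pos ⟨0, hp⟩)
      (le_ciSup (Set.Finite.bddAbove (Set.finite_range _)) _)
  have hmin : 0 ≤ ⨅ i, hVMV.1.eigenvalues i :=
    Real.iInf_nonneg fun i => hVMV.eigenvalues_nonneg i
  have hc0 : 0 ≤ c := div_nonneg hmin hmax.le
  -- the middle matrix is PSD
  have hmid : (M - N - c • M).PosSemidef := by
    have heq : M - N - c • M =
        ((M - V * M * V) - (⨅ i, hVMV.1.eigenvalues i) • 1) +
          (c • ((⨆ i, hM.1.eigenvalues i) • 1 - M)) + (V * M * V - N) := by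
      have hcmul : c * (⨆ i, hM.1.eigenvalues i) = ⨅ i, hVMV.1.eigenvalues i := by
        rw [hc, div_mul_cancel₀ _ hmax.ne']
      rw [smul_sub, smul_smul, hcmul]
      abel
    rw [heq]
    exact psd_add' (psd_add' (sub_iInf_smul_one_posSemidef hVMV.1)
      (psd_smul' hc0 (iSup_smul_one_sub_posSemidef hM.1))) hNle
  have hfinal : K * (M - N) * Kᵀ - c • (K * M * Kᵀ) = K * (M - N - c • M) * Kᵀ := by
    simp only [Matrix.mul_sub, Matrix.sub_mul, Matrix.mul_smul, Matrix.smul_mul]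
  rw [hfinal, ← Matrix.conjTranspose_eq_transpose_of_trivial]
  exact hmid.mul_mul_conjTranspose_same K
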